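/- Let λ ∈ ℂ and β ∈ ℂ^M satisfy D·β = λ·β and B†·β = 0, and let x := (0, β) ∈ ℂ^{N+M} be the vector whose first N coordinates vanish and whose last M coordinates are β. Then γ(z)·x = −(z² − λz + 1)·x for every z ∈ ℂ. In particular, if z₀ ∈ ℂ, z₀ ≠ 0, satisfies z₀ + z₀⁻¹ = λ, then γ(z₀)·x = 0; and if moreover γ(z) is invertible and z ∉ {z₀, z₀⁻¹}, then γ(z)⁻¹·x = −((z − z₀)(z − z₀⁻¹))⁻¹·x. -/

import Mathlib

open Matrix

/-- `H_G := [[A, B†],[B, D]]`, the adjacency matrix of the finite scattering graph. -/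
def HGmat {N M : ℕ} (A : Matrix (Fin N) (Fin N) ℂ)
    (B : Matrix (Fin M) (Fin N) ℂ) (D : Matrix (Fin M) (Fin M) ℂ) :
    Matrix (Fin N ⊕ Fin M) (Fin N ⊕ Fin M) ℂ :=
  fromBlocks A Bᴴ B D

/-- `P_M`, the diagonal projection onto the last `M` coordinates. -/
def PMmat (N M : ℕ) : Matrix (Fin N ⊕ Fin M) (Fin N ⊕ Fin M) ℂ :=
  fromBlocks 0 0 0 1

/-- `γ(z) := −z²·P_M + z·H_G − 1`. -/
def gammaMat {N M : ℕ} (A : Matrix (Fin N) (Fin N) ℂ)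
    (B : Matrix (Fin M) (Fin N) ℂ) (D : Matrix (Fin M) (Fin M) ℂ) (z : ℂ) :
    Matrix (Fin N ⊕ Fin M) (Fin N ⊕ Fin M) ℂ :=
  -(z ^ 2) • PMmat N M + z • HGmat A B D - 1

/-- if `D·β = λ·β` and `B†·β = 0`, the confined bound state
`x := (0, β)` satisfies `γ(z)·x = −(z² − λz + 1)·x` for all `z`; in particular
`γ(z₀)·x = 0` whenever `z₀ + z₀⁻¹ = λ`, and `γ(z)⁻¹·x = −((z−z₀)(z−z₀⁻¹))⁻¹·x`
whenever `γ(z)` is invertible and `z ∉ {z₀, z₀⁻¹}`. -/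
theorem confined_bound_state_gamma {N M : ℕ} (hN : 0 < N) (hM : 0 < M)
    (A : Matrix (Fin N) (Fin N) ℂ) (B : Matrix (Fin M) (Fin N) ℂ)
    (D : Matrix (Fin M) (Fin M) ℂ)
    (lam : ℂ) (β : Fin M → ℂ) (x : Fin N ⊕ Fin M → ℂ)
    (hβD : D.mulVec β = lam • β) (hβB : Bᴴ.mulVec β = 0)
    (hx : x = Sum.elim (fun _ => (0 : ℂ)) β) :
    (∀ z : ℂ, (gammaMat A B D z).mulVec x = (-(z ^ 2 - lam * z + 1)) • x) ∧
    (∀ z₀ : ℂ, z₀ ≠ 0 → z₀ + z₀⁻¹ = lam →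
      (gammaMat A B D z₀).mulVec x = 0 ∧
      (∀ z : ℂ, IsUnit (gammaMat A B D z) → z ≠ z₀ → z ≠ z₀⁻¹ →
        ((gammaMat A B D z)⁻¹).mulVec x =
          (-(((z - z₀) * (z - z₀⁻¹))⁻¹)) • x)) := by
  have key : ∀ z : ℂ, (gammaMat A B D z).mulVec x = (-(z ^ 2 - lam * z + 1)) • x := by
    intro z
    subst hx
    have h0 : (fun _ : Fin N => (0:ℂ)) = (0 : Fin N → ℂ) := rfl
    funext i
    cases i with
    | inl i =>
        simp [gammaMat, HGmat, PMmat, Matrix.sub_mulVec, Matrix.add_mulVec,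
          Matrix.neg_mulVec, Matrix.smul_mulVec, Matrix.fromBlocks_mulVec,
          hβD, hβB, Matrix.one_mulVec, h0, Matrix.mulVec_zero]
    | inr i =>
        simp [gammaMat, HGmat, PMmat, Matrix.sub_mulVec, Matrix.add_mulVec,
          Matrix.neg_mulVec, Matrix.smul_mulVec, Matrix.fromBlocks_mulVec,
          hβD, hβB, Matrix.one_mulVec, h0, Matrix.mulVec_zero]
        ring
  refine ⟨key, fun z₀ hz₀ hlam => ?_⟩
  have hz₀eq : (gammaMat A B D z₀).mulVec x = 0 := by
    rw [key z₀]
    have : z₀ ^ 2 - lam * z₀ + 1 = 0 := by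
      rw [← hlam]
      linear_combination -(mul_inv_cancel₀ hz₀)
    simp [this]
  refine ⟨hz₀eq, fun z hU hz1 hz2 => ?_⟩
  have hfac : z ^ 2 - lam * z + 1 = (z - z₀) * (z - z₀⁻¹) := by
    rw [← hlam]
    linear_combination -(mul_inv_cancel₀ hz₀)
  set c : ℂ := (z - z₀) * (z - z₀⁻¹) with hc
  have hcne : c ≠ 0 := mul_ne_zero (sub_ne_zero.mpr hz1) (sub_ne_zero.mpr hz2)
  have h1 : (gammaMat A B D z)⁻¹ * (gammaMat A B D z) = 1 :=
    Matrix.nonsing_inv_mul _ ((Matrix.isUnit_iff_isUnit_det _).mp hU)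
  have h2 : (gammaMat A B D z)⁻¹.mulVec ((gammaMat A B D z).mulVec x) = x := by
    rw [Matrix.mulVec_mulVec, h1, Matrix.one_mulVec]
  rw [key z, hfac] at h2
  rw [Matrix.mulVec_smul] at h2
  calc (gammaMat A B D z)⁻¹.mulVec x
      = (-c⁻¹) • ((-c) • (gammaMat A B D z)⁻¹.mulVec x) := by
        rw [smul_smul]
        simp [hcne]
    _ = (-c⁻¹) • x := by rw [h2]
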